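/- If the structural constants matrix M of an n-dimensional evolution algebra E over ℝ has exactly m columns with indices i₁,…,i_m such that a_{i_j i_j} ≠ 0 and a_{k i_j} = 0 for all k ≠ i_j, then E has exactly m weight functions, namely σ_j(x) = a_{i_j i_j}·x_{i_j} for j = 1,…,m. -/

import Mathlib

def evolMul (n : ℕ) (a : Fin n → Fin n → ℝ) (x y : Fin n → ℝ) : Fin n → ℝ :=
  fun j => ∑ i, a i j * (x i * y i)

/-- The candidate weight function `σ_j(x) = a_{jj} x_j` as a linear map. -/
noncomputable def weightFn (n : ℕ) (a : Fin n → Fin n → ℝ) (j : Fin n) :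
    (Fin n → ℝ) →ₗ[ℝ] ℝ :=
  a j j • LinearMap.proj j

lemma weightFn_apply (n : ℕ) (a : Fin n → Fin n → ℝ) (j : Fin n) (x : Fin n → ℝ) :
    weightFn n a j x = a j j * x j := rfl

lemma evolMul_single (n : ℕ) (a : Fin n → Fin n → ℝ) (i k : Fin n) :
    evolMul n a (Pi.single i 1) (Pi.single k 1)
      = if i = k then (fun j => a i j) else 0 := by
  funext j
  unfold evolMul
  by_cases h : i = k
  · subst h
    simp [Pi.single_apply]
  · simp only [h, if_false, Pi.zero_apply]
    apply Finset.sum_eq_zero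
    intro l _
    rcases eq_or_ne l i with rfl | hl
    · simp [Pi.single_apply, Ne.symm h]
    · simp [Pi.single_apply, hl]

theorem exactly_m_weight_functions (n : ℕ) (a : Fin n → Fin n → ℝ)
    (S : Finset (Fin n))
    (hS : ∀ j : Fin n, j ∈ S ↔ (a j j ≠ 0 ∧ ∀ k : Fin n, k ≠ j → a k j = 0)) :
    (∀ σ : (Fin n → ℝ) →ₗ[ℝ] ℝ,
      (σ ≠ 0 ∧ ∀ x y : Fin n → ℝ, σ (evolMul n a x y) = σ x * σ y) ↔
        ∃ j ∈ S, σ = weightFn n a j) ∧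
    Set.InjOn (weightFn n a) ↑S := by
  constructor
  · intro σ
    constructor
    · rintro ⟨hne, hmul⟩
      set c : Fin n → ℝ := fun i => σ (Pi.single i 1) with hc
      have hσ : ∀ x : Fin n → ℝ, σ x = ∑ i, x i * c i := by
        intro x
        rw [LinearMap.pi_apply_eq_sum_univ σ x]
        refine Finset.sum_congr rfl fun i _ => ?_
        rw [smul_eq_mul]
        congr 2
        funext j
        simp [Pi.single_apply, eq_comm]
      -- orthogonality: c i * c k = 0 for i ≠ k
      have horth : ∀ i k : Fin n, i ≠ k → c i * c k = 0 := by
        intro i k hik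
        have := hmul (Pi.single i 1) (Pi.single k 1)
        rw [evolMul_single] at this
        simp only [hik, if_false, map_zero] at this
        exact this.symm
      -- square relation
      have hsq : ∀ i : Fin n, ∑ k, a i k * c k = c i * c i := by
        intro i
        have := hmul (Pi.single i 1) (Pi.single i 1)
        rw [evolMul_single] at this
        simp only [if_pos rfl] at this
        rw [hσ] at this
        simpa using this
      -- some c j ≠ 0
      obtain ⟨j, hj⟩ : ∃ j, c j ≠ 0 := by
        by_contra h
        push_neg at h
        apply hne
        ext x
        simp [hσ, h]
      have hck : ∀ k : Fin n, k ≠ j → c k = 0 := by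
        intro k hk
        have := horth k j hk
        rcases mul_eq_zero.mp this with h | h
        · exact h
        · exact absurd h hj
      have hsum : ∀ i : Fin n, ∑ k, a i k * c k = a i j * c j := by
        intro i
        rw [Finset.sum_eq_single j]
        · intro k _ hk; rw [hck k hk]; ring
        · intro h; exact absurd (Finset.mem_univ j) h
      have hajj : a j j = c j := by
        have := hsq j
        rw [hsum] at this
        field_simp at this
        exact this
      have haij : ∀ i : Fin n, i ≠ j → a i j = 0 := by
        intro i hi
        have h1 := hsq i
        rw [hsum, hck i hi, mul_zero] at h1
        rcases mul_eq_zero.mp h1 with h | h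
        · exact h
        · exact absurd h hj
      refine ⟨j, ?_, ?_⟩
      · rw [hS]
        exact ⟨hajj ▸ hj, haij⟩
      · refine LinearMap.ext fun x => ?_
        rw [hσ, weightFn_apply, hajj]
        rw [Finset.sum_eq_single j]
        · ring
        · intro k _ hk; rw [hck k hk]; ring
        · intro h; exact absurd (Finset.mem_univ j) h
    · rintro ⟨j, hj, rfl⟩
      obtain ⟨hajj, hcol⟩ := (hS j).mp hj
      constructor
      · intro h
        apply hajj
        have := congrArg (fun f => f (Pi.single j 1)) h
        simpa [weightFn_apply] using this
      · intro x y
        rw [weightFn_apply, weightFn_apply, weightFn_apply]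
        unfold evolMul
        rw [Finset.sum_eq_single j]
        · ring
        · intro k _ hk; rw [hcol k hk]; ring
        · intro h; exact absurd (Finset.mem_univ j) h
  · intro j hj j' hj' h
    simp only [Finset.coe_sort_coe, Finset.mem_coe] at hj hj'
    obtain ⟨hajj, _⟩ := (hS j).mp hj
    by_contra hne
    have := congrArg (fun f => f (Pi.single j 1)) h
    simp only [weightFn_apply] at this
    rw [Pi.single_apply, Pi.single_apply] at this
    simp [if_neg (Ne.symm hne)] at this
    exact hajj this
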